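/- For complex numbers a, b, c with c ≠ 0, |Im(ab/c)| ≤ (|Im(a)|·|b|·|c| + |Im(b)|·|a|·|c| + |Im(c)|·|a|·|b| + |Im(a)|·|Im(b)|·|Im(c)|) / |c|². -/

import Mathlib

/-- For complex `a`, `b`, `c` with `c ≠ 0`:
`|Im(ab/c)| ≤ (|Im a||b||c| + |Im b||a||c| + |Im c||a||b| + |Im a||Im b||Im c|)/|c|²`. -/
theorem abs_im_mul_div_le (a b c : ℂ) (hc : c ≠ 0) :
    |(a * b / c).im| ≤
      (|a.im| * ‖b‖ * ‖c‖ + |b.im| * ‖a‖ * ‖c‖ +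
        |c.im| * ‖a‖ * ‖b‖ + |a.im| * |b.im| * |c.im|) /
        ‖c‖ ^ 2 := by
  have hC : (0:ℝ) < ‖c‖ := by
    simpa using (norm_pos_iff.mpr hc)
  have hc2 : (0:ℝ) < ‖c‖ ^ 2 := by positivity
  rw [le_div_iff₀ hc2]
  have him : (a * b / c).im * ‖c‖ ^ 2 = (a * b * (starRingEnd ℂ c)).im := by
    have h1 : (‖c‖ ^ 2 : ℂ) = c * (starRingEnd ℂ c) := by
      rw [Complex.mul_conj]
      norm_cast
      simp [Complex.sq_norm]
    have : a * b / c * (‖c‖ ^ 2 : ℂ) = a * b * (starRingEnd ℂ c) := by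
      rw [h1]
      field_simp
    calc (a * b / c).im * ‖c‖ ^ 2
        = (a * b / c * (‖c‖ ^ 2 : ℂ)).im := by
          simp [Complex.mul_im, ← Complex.ofReal_pow]
      _ = (a * b * (starRingEnd ℂ c)).im := by rw [this]
  have habs : |(a * b / c).im| * ‖c‖ ^ 2 = |(a * b * (starRingEnd ℂ c)).im| := by
    rw [← him, abs_mul, abs_of_pos hc2]
  rw [habs]
  set x1 := a.re; set y1 := a.im; set x2 := b.re; set y2 := b.im
  set x3 := c.re; set y3 := c.im
  have he : (a * b * (starRingEnd ℂ c)).im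
      = x1 * y2 * x3 + y1 * x2 * x3 - x1 * x2 * y3 + y1 * y2 * y3 := by
    simp [Complex.mul_im, Complex.mul_re]
    ring
  rw [he]
  have hx1 : |x1| ≤ ‖a‖ := Complex.abs_re_le_norm a
  have hy1 : |y1| ≤ ‖a‖ := Complex.abs_im_le_norm a
  have hx2 : |x2| ≤ ‖b‖ := Complex.abs_re_le_norm b
  have hy2 : |y2| ≤ ‖b‖ := Complex.abs_im_le_norm b
  have hx3 : |x3| ≤ ‖c‖ := Complex.abs_re_le_norm c
  have hy3 : |y3| ≤ ‖c‖ := Complex.abs_im_le_norm c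
  have h1 : |x1 * y2 * x3| ≤ |y2| * ‖a‖ * ‖c‖ := by
    rw [abs_mul, abs_mul]
    calc |x1| * |y2| * |x3| ≤ ‖a‖ * |y2| * ‖c‖ := by gcongr
      _ = |y2| * ‖a‖ * ‖c‖ := by ring
  have h2 : |y1 * x2 * x3| ≤ |y1| * ‖b‖ * ‖c‖ := by
    rw [abs_mul, abs_mul]
    gcongr
  have h3 : |x1 * x2 * y3| ≤ |y3| * ‖a‖ * ‖b‖ := by
    rw [abs_mul, abs_mul]
    calc |x1| * |x2| * |y3| ≤ ‖a‖ * ‖b‖ * |y3| := by gcongr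
      _ = |y3| * ‖a‖ * ‖b‖ := by ring
  have h4 : |y1 * y2 * y3| = |y1| * |y2| * |y3| := by
    rw [abs_mul, abs_mul]
  calc |x1 * y2 * x3 + y1 * x2 * x3 - x1 * x2 * y3 + y1 * y2 * y3|
      ≤ |x1 * y2 * x3| + |y1 * x2 * x3| + |x1 * x2 * y3| + |y1 * y2 * y3| := by
        have := abs_add_le (x1 * y2 * x3 + y1 * x2 * x3 - x1 * x2 * y3) (y1 * y2 * y3)
        have h5 := abs_sub (x1 * y2 * x3 + y1 * x2 * x3) (x1 * x2 * y3)
        have h6 := abs_add_le (x1 * y2 * x3) (y1 * x2 * x3)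
        linarith
    _ ≤ |y1| * ‖b‖ * ‖c‖ + |y2| * ‖a‖ * ‖c‖ +
        |y3| * ‖a‖ * ‖b‖ + |y1| * |y2| * |y3| := by
        rw [h4]; linarith
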